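/- The operadic insertions on the Lie algebras t̃ commute for parallel composition: let A, B, C be finite types and a, a′ ∈ A with a ≠ a′. Then, under the canonical identification of the index sets ((A−{a}) ⊔ B − {a′}) ⊔ C and ((A−{a′}) ⊔ C − {a}) ⊔ B, one has ∘_{a′}(∘_a(u, v), w) = ∘_a(∘_{a′}(u, w), v) for all u ∈ t̃_A, v ∈ t̃_B, w ∈ t̃_C, where each ∘ denotes the insertion homomorphism at the indicated element. -/

import Mathlib

/-! The extended Drinfeld–Kohno Lie algebras `t̃_A` over ℚ and their operadic
insertion homomorphisms. -/

/-- Generators `t_{ab}` (for `a ≠ b`) and `s_a` of the extended Drinfeld–Kohno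
Lie algebra `t̃_A`. -/
inductive ExtGen (A : Type) : Type
  | t : (a b : A) → a ≠ b → ExtGen A
  | s : A → ExtGen A

open FreeLieAlgebra in
/-- The defining relations of `t̃_A`: the infinitesimal braid relations on the `t`'s
together with the centrality of the `s_a`. -/
def extRels (A : Type) : Set (FreeLieAlgebra ℚ (ExtGen A)) :=
  {x | ∃ (a b : A) (h : a ≠ b),
      x = of ℚ (ExtGen.t a b h) - of ℚ (ExtGen.t b a h.symm)} ∪
  {x | ∃ (a b c d : A) (h₁ : a ≠ b) (h₂ : c ≠ d),
      a ≠ c ∧ a ≠ d ∧ b ≠ c ∧ b ≠ d ∧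
      x = ⁅of ℚ (ExtGen.t a b h₁), of ℚ (ExtGen.t c d h₂)⁆} ∪
  {x | ∃ (a b c : A) (hab : a ≠ b) (hbc : b ≠ c) (hac : a ≠ c),
      x = ⁅of ℚ (ExtGen.t a c hac), of ℚ (ExtGen.t a b hab) + of ℚ (ExtGen.t b c hbc)⁆} ∪
  {x | ∃ (a : A) (g : ExtGen A), x = ⁅of ℚ (ExtGen.s a), of ℚ g⁆}

/-- The Lie ideal generated by the relations of `t̃_A`. -/
noncomputable def extIdeal (A : Type) : LieIdeal ℚ (FreeLieAlgebra ℚ (ExtGen A)) :=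
  LieSubmodule.lieSpan ℚ _ (extRels A)

/-- The extended Drinfeld–Kohno Lie algebra `t̃_A`. -/
abbrev DKtTilde (A : Type) := FreeLieAlgebra ℚ (ExtGen A) ⧸ extIdeal A

/-- The class of the generator `t_{ab}` in `t̃_A`. -/
noncomputable def ttcl {A : Type} (a b : A) (h : a ≠ b) : DKtTilde A :=
  LieSubmodule.Quotient.mk (N := extIdeal A) (FreeLieAlgebra.of ℚ (ExtGen.t a b h))

/-- The class of the generator `s_a` in `t̃_A`. -/
noncomputable def scl {A : Type} (a : A) : DKtTilde A :=
  LieSubmodule.Quotient.mk (N := extIdeal A) (FreeLieAlgebra.of ℚ (ExtGen.s a))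

theorem ttcl_symm {A : Type} (a b : A) (h : a ≠ b) : ttcl a b h = ttcl b a h.symm := by
  refine (Submodule.Quotient.eq _).mpr ?_
  exact LieSubmodule.subset_lieSpan (Or.inl (Or.inl (Or.inl ⟨a, b, h, rfl⟩)))

section ProdLie

variable {L M : Type} [LieRing L] [LieRing M]

/-- Componentwise bracket on a product. -/
instance Prod.instLieRingBracket : Bracket (L × M) (L × M) :=
  ⟨fun x y => (⁅x.1, y.1⁆, ⁅x.2, y.2⁆)⟩

@[simp] theorem Prod.bracket_def (x y : L × M) :
    ⁅x, y⁆ = (⁅x.1, y.1⁆, ⁅x.2, y.2⁆) := rfl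

/-- The product of two Lie rings, with componentwise bracket. -/
instance Prod.instLieRing : LieRing (L × M) where
  add_lie x y z := by ext <;> simp
  lie_add x y z := by ext <;> simp
  lie_self x := by ext <;> simp
  leibniz_lie x y z := by ext <;> simp

/-- The product of two Lie algebras. -/
instance Prod.instLieAlgebra (R : Type*) [CommRing R] [LieAlgebra R L] [LieAlgebra R M] :
    LieAlgebra R (L × M) where
  lie_smul t x y := by ext <;> simp

end ProdLie

/-- The image in `t̃_C` of an unordered pair of elements of `B` under an injection
`e : B → C`: the unordered pair `{x, y}` (with `x ≠ y`) is sent to the class of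
`t_{e x, e y}`, and diagonal pairs are sent to `0`.  Well defined thanks to the
relation `t_{ab} = t_{ba}`. -/
noncomputable def ttclPairMap {B C : Type} [DecidableEq B] (e : B → C)
    (he : Function.Injective e) : Sym2 B → DKtTilde C :=
  Sym2.lift ⟨fun x y => if h : x ≠ y then ttcl (e x) (e y) (fun hh => h (he hh)) else 0, by
    intro x y
    by_cases h : x = y
    · subst h; rfl
    · simp only [dif_pos h, dif_pos (Ne.symm h)]
      exact ttcl_symm _ _ _⟩

/-- `Σ_{{x,y} ⊆ B, x ≠ y} t_{e x, e y}` in `t̃_C`, the sum running over unordered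
pairs of distinct elements of `B`. -/
noncomputable def pairSum {B C : Type} [Fintype B] [DecidableEq B] (e : B → C)
    (he : Function.Injective e) : DKtTilde C :=
  ∑ p ∈ Finset.univ.filter (fun p : Sym2 B => ¬ p.IsDiag), ttclPairMap e he p

/-- The operadic insertion `∘_a : t̃_A × t̃_B → t̃_{(A−{a}) ⊔ B}` is the (unique) Lie
algebra homomorphism from the product Lie algebra satisfying these equations on the
classes of the generators. -/
def IsInsertion (A B : Type) [Fintype B] [DecidableEq B] (a : A)
    (f : DKtTilde A × DKtTilde B →ₗ⁅ℚ⁆ DKtTilde ({x : A // x ≠ a} ⊕ B)) : Prop :=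
  (∀ (x y : A) (hx : x ≠ a) (hy : y ≠ a) (hxy : x ≠ y),
      f (ttcl x y hxy, 0) =
        ttcl (Sum.inl ⟨x, hx⟩) (Sum.inl ⟨y, hy⟩)
          (fun h => hxy (congrArg Subtype.val (Sum.inl_injective h)))) ∧
  (∀ (x : A) (hx : x ≠ a), f (scl x, 0) = scl (Sum.inl ⟨x, hx⟩)) ∧
  (∀ (x y : B) (hxy : x ≠ y),
      f (0, ttcl x y hxy) =
        ttcl (Sum.inr x) (Sum.inr y) (fun h => hxy (Sum.inr_injective h))) ∧
  (∀ x : B, f (0, scl x) = scl (Sum.inr x)) ∧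
  (∀ (x : A) (hx : x ≠ a) (hax : a ≠ x),
      f (ttcl a x hax, 0) =
        ∑ y : B, ttcl (Sum.inl ⟨x, hx⟩) (Sum.inr y) (fun h => Sum.inl_ne_inr h)) ∧
  (f (scl a, 0) = (∑ x : B, scl (Sum.inr x)) +
      pairSum (Sum.inr : B → {x : A // x ≠ a} ⊕ B) Sum.inr_injective)

/-- A relabelling homomorphism `t̃_X → t̃_Y` induced by a bijection `e : X ≃ Y` of the
index sets: it sends the class of `t_{xy}` to the class of `t_{e x, e y}` and the class
of `s_x` to the class of `s_{e x}`. -/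
def IsRelabel {X Y : Type} (e : X ≃ Y) (r : DKtTilde X →ₗ⁅ℚ⁆ DKtTilde Y) : Prop :=
  (∀ (x y : X) (h : x ≠ y),
      r (ttcl x y h) = ttcl (e x) (e y) (fun hh => h (e.injective hh))) ∧
  (∀ x : X, r (scl x) = scl (e x))

/-- The canonical identification of index sets
`((A−{a}) ⊔ B − {a′}) ⊔ C ≃ ((A−{a′}) ⊔ C − {a}) ⊔ B`. -/
def commEquiv (A B C : Type) (a a' : A) (h : a ≠ a') :
    ({x : {x : A // x ≠ a} ⊕ B // x ≠ Sum.inl ⟨a', Ne.symm h⟩} ⊕ C) ≃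
      ({x : {x : A // x ≠ a'} ⊕ C // x ≠ Sum.inl ⟨a, h⟩} ⊕ B) where
  toFun z := match z with
    | .inl ⟨.inl ⟨x, hxa⟩, hx⟩ =>
        .inl ⟨.inl ⟨x, fun hxa' => hx (by cases hxa'; rfl)⟩,
          fun hh => hxa (congrArg Subtype.val (Sum.inl_injective hh))⟩
    | .inl ⟨.inr y, _⟩ => .inr y
    | .inr c => .inl ⟨.inr c, fun hh => Sum.inr_ne_inl hh⟩
  invFun z := match z with
    | .inl ⟨.inl ⟨x, hxa'⟩, hx⟩ =>
        .inl ⟨.inl ⟨x, fun hxa => hx (by cases hxa; rfl)⟩,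
          fun hh => hxa' (congrArg Subtype.val (Sum.inl_injective hh))⟩
    | .inl ⟨.inr c, _⟩ => .inr c
    | .inr y => .inl ⟨.inr y, fun hh => Sum.inr_ne_inl hh⟩
  left_inv := by rintro (⟨(⟨x, hx⟩ | y), hq⟩ | c) <;> rfl
  right_inv := by rintro (⟨(⟨x, hx⟩ | c), hq⟩ | y) <;> rfl
section Auxiliary

open FreeLieAlgebra

/-- The quotient projection as a Lie algebra homomorphism. -/
def quotLieHom {L : Type} [LieRing L] [LieAlgebra ℚ L] (I : LieIdeal ℚ L) :
    L →ₗ⁅ℚ⁆ L ⧸ I :=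
  { I.toSubmodule.mkQ with map_lie' := rfl }

lemma mk_t {A : Type} (a b : A) (h : a ≠ b) :
    (LieSubmodule.Quotient.mk (N := extIdeal A) (FreeLieAlgebra.of ℚ (ExtGen.t a b h))) =
      ttcl a b h := rfl

lemma mk_s {A : Type} (a : A) :
    (LieSubmodule.Quotient.mk (N := extIdeal A) (FreeLieAlgebra.of ℚ (ExtGen.s a))) =
      scl a := rfl

/-- Homomorphisms out of `t̃_A` agreeing on the generator classes agree. -/
lemma dkt_hom_ext {A M : Type} [LieRing M] [LieAlgebra ℚ M]
    {F G : DKtTilde A →ₗ⁅ℚ⁆ M}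
    (h : ∀ g0 : ExtGen A,
      F (LieSubmodule.Quotient.mk (N := extIdeal A) (FreeLieAlgebra.of ℚ g0)) =
      G (LieSubmodule.Quotient.mk (N := extIdeal A) (FreeLieAlgebra.of ℚ g0))) :
    F = G := by
  have H : F.comp (quotLieHom (extIdeal A)) = G.comp (quotLieHom (extIdeal A)) :=
    FreeLieAlgebra.hom_ext fun x => h x
  apply LieHom.ext
  intro y
  obtain ⟨x, rfl⟩ := LieSubmodule.Quotient.surjective_mk' (N := extIdeal A) y
  exact LieHom.congr_fun H x

variable {L M N : Type} [LieRing L] [LieAlgebra ℚ L] [LieRing M] [LieAlgebra ℚ M]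
  [LieRing N] [LieAlgebra ℚ N]

/-- The inclusion into the first factor, as a Lie algebra homomorphism. -/
def lieInlQ (L M : Type) [LieRing L] [LieAlgebra ℚ L] [LieRing M] [LieAlgebra ℚ M] :
    L →ₗ⁅ℚ⁆ L × M :=
  { LinearMap.inl ℚ L M with
    map_lie' := by intro x y; ext <;> simp }

/-- The inclusion into the second factor, as a Lie algebra homomorphism. -/
def lieInrQ (L M : Type) [LieRing L] [LieAlgebra ℚ L] [LieRing M] [LieAlgebra ℚ M] :
    M →ₗ⁅ℚ⁆ L × M :=
  { LinearMap.inr ℚ L M with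
    map_lie' := by intro x y; ext <;> simp }

@[simp] lemma lieInlQ_apply (x : L) : lieInlQ L M x = (x, 0) := rfl

lemma lieHom_map_sum (F : L →ₗ⁅ℚ⁆ M) {ι : Type*} (s : Finset ι) (f : ι → L) :
    F (∑ i ∈ s, f i) = ∑ i ∈ s, F (f i) :=
  map_sum F.toLinearMap f s
@[simp] lemma lieInrQ_apply (x : M) : lieInrQ L M x = (0, x) := rfl

lemma lieHom_pair_sum_fst (Gh : L × M →ₗ⁅ℚ⁆ N) {ι : Type*} (s : Finset ι) (F : ι → L) :
    Gh (∑ i ∈ s, F i, 0) = ∑ i ∈ s, Gh (F i, 0) := by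
  have h : ((∑ i ∈ s, F i : L), (0 : M)) = ∑ i ∈ s, ((F i, 0) : L × M) := by
    induction s using Finset.cons_induction with
    | empty => simp
    | cons a s ha ih => rw [Finset.sum_cons, Finset.sum_cons, ← ih, Prod.mk_add_mk, add_zero]
  rw [h, lieHom_map_sum]

lemma map_pairSum {B C D : Type} [Fintype B] [DecidableEq B] (e : B → C)
    (he : Function.Injective e) (e' : B → D) (he' : Function.Injective e')
    (F : DKtTilde C →ₗ⁅ℚ⁆ DKtTilde D)
    (h : ∀ (x y : B) (hxy : x ≠ y),
      F (ttcl (e x) (e y) (fun hh => hxy (he hh))) =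
        ttcl (e' x) (e' y) (fun hh => hxy (he' hh))) :
    F (pairSum e he) = pairSum e' he' := by
  unfold pairSum
  rw [lieHom_map_sum]
  refine Finset.sum_congr rfl ?_
  intro p hp
  simp only [Finset.mem_filter] at hp
  revert hp
  induction p using Sym2.ind with
  | _ x y =>
    intro hp
    have hxy : x ≠ y := fun hh => hp.2 (Sym2.mk_isDiag_iff.mpr hh)
    simp only [ttclPairMap, Sym2.lift_mk]
    rw [dif_pos hxy, dif_pos hxy]
    exact h x y hxy

end Auxiliary

/-- commutativity of parallel operadic insertions on the Lie algebras `t̃`: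
for `a ≠ a′` in `A`, `∘_{a′} (∘_a (u, v), w) = ∘_a (∘_{a′} (u, w), v)` under the
canonical identification `((A−{a}) ⊔ B − {a′}) ⊔ C ≃ ((A−{a′}) ⊔ C − {a}) ⊔ B`. -/
theorem insertion_comm (A B C : Type)
    [Fintype A] [Fintype B] [Fintype C] [DecidableEq A] [DecidableEq B] [DecidableEq C]
    (a a' : A) (haa' : a ≠ a')
    (f : DKtTilde A × DKtTilde B →ₗ⁅ℚ⁆ DKtTilde ({x : A // x ≠ a} ⊕ B))
    (hf : IsInsertion A B a f)
    (g : DKtTilde ({x : A // x ≠ a} ⊕ B) × DKtTilde C →ₗ⁅ℚ⁆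
      DKtTilde ({x : {x : A // x ≠ a} ⊕ B // x ≠ Sum.inl ⟨a', Ne.symm haa'⟩} ⊕ C))
    (hg : IsInsertion ({x : A // x ≠ a} ⊕ B) C (Sum.inl ⟨a', Ne.symm haa'⟩) g)
    (p : DKtTilde A × DKtTilde C →ₗ⁅ℚ⁆ DKtTilde ({x : A // x ≠ a'} ⊕ C))
    (hp : IsInsertion A C a' p)
    (q : DKtTilde ({x : A // x ≠ a'} ⊕ C) × DKtTilde B →ₗ⁅ℚ⁆
      DKtTilde ({x : {x : A // x ≠ a'} ⊕ C // x ≠ Sum.inl ⟨a, haa'⟩} ⊕ B))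
    (hq : IsInsertion ({x : A // x ≠ a'} ⊕ C) B (Sum.inl ⟨a, haa'⟩) q)
    (r : DKtTilde ({x : {x : A // x ≠ a} ⊕ B // x ≠ Sum.inl ⟨a', Ne.symm haa'⟩} ⊕ C) →ₗ⁅ℚ⁆
      DKtTilde ({x : {x : A // x ≠ a'} ⊕ C // x ≠ Sum.inl ⟨a, haa'⟩} ⊕ B))
    (hr : IsRelabel (commEquiv A B C a a' haa') r)
    (u : DKtTilde A) (v : DKtTilde B) (w : DKtTilde C) :
    r (g (f (u, v), w)) = q (p (u, w), v) := by
  classical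
  obtain ⟨hf1, hf2, hf3, hf4, hf5, hf6⟩ := hf
  obtain ⟨hg1, hg2, hg3, hg4, hg5, hg6⟩ := hg
  obtain ⟨hp1, hp2, hp3, hp4, hp5, hp6⟩ := hp
  obtain ⟨hq1, hq2, hq3, hq4, hq5, hq6⟩ := hq
  obtain ⟨hr1, hr2⟩ := hr
  -- the case of a generator `t_{a y}`
  have caseA : ∀ (y : A) (hy : y ≠ a) (hay : a ≠ y),
      r (g (f (ttcl a y hay, 0), 0)) = q (p (ttcl a y hay, 0), 0) := by
    intro y hy hay
    by_cases hy' : y = a'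
    · subst hy'
      have hR : q (p (ttcl a y hay, 0), 0) =
          ∑ c : C, ∑ b : B, ttcl (Sum.inl ⟨Sum.inr c, fun h => by cases h⟩)
            (Sum.inr b) (fun h => by cases h) := by
        rw [ttcl_symm a y hay, hp5 a haa' (Ne.symm hay), lieHom_pair_sum_fst q]
        refine Finset.sum_congr rfl fun c _ => ?_
        rw [hq5 (Sum.inr c) (fun h => by cases h) (fun h => by cases h)]
      rw [hR, hf5 y (Ne.symm haa') hay, lieHom_pair_sum_fst g, lieHom_map_sum]
      have hgb : ∀ b : B,
          r (g (ttcl (Sum.inl ⟨y, Ne.symm haa'⟩) (Sum.inr b) (fun h => by cases h), 0)) =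
          ∑ c : C, ttcl (Sum.inr b)
            (Sum.inl ⟨Sum.inr c, fun h => by cases h⟩) (fun h => by cases h) := by
        intro b
        rw [hg5 (Sum.inr b) (fun h => by cases h) (fun h => by cases h),
          lieHom_map_sum]
        refine Finset.sum_congr rfl fun c _ => ?_
        rw [hr1]
        rfl
      simp only [hgb]
      rw [Finset.sum_comm]
      exact Finset.sum_congr rfl fun c _ => Finset.sum_congr rfl fun b _ => ttcl_symm _ _ _
    · rw [hf5 y hy hay, lieHom_pair_sum_fst g, lieHom_map_sum, hp1 a y haa' hy' hay,
        hq5 (Sum.inl ⟨y, hy'⟩) (fun h => hy (congrArg Subtype.val (Sum.inl_injective h)))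
          (fun h => hy ((congrArg Subtype.val (Sum.inl_injective h)).symm))]
      refine Finset.sum_congr rfl fun b _ => ?_
      rw [hg1 (Sum.inl ⟨y, hy⟩) (Sum.inr b)
          (fun h => hy' (congrArg Subtype.val (Sum.inl_injective h)))
          (fun h => by cases h) (fun h => by cases h), hr1]
      rfl
  -- the case of a generator `t_{a' y}` with `y ∉ {a, a'}`
  have caseA' : ∀ (y : A) (hy : y ≠ a) (hy' : y ≠ a') (hay : a' ≠ y),
      r (g (f (ttcl a' y hay, 0), 0)) = q (p (ttcl a' y hay, 0), 0) := by
    intro y hy hy' hay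
    rw [hf1 a' y (Ne.symm haa') hy hay,
      hg5 (Sum.inl ⟨y, hy⟩) (fun h => hy' (congrArg Subtype.val (Sum.inl_injective h)))
        (fun h => hay (congrArg Subtype.val (Sum.inl_injective h))),
      lieHom_map_sum, hp5 y hy' hay, lieHom_pair_sum_fst q]
    refine Finset.sum_congr rfl fun c _ => ?_
    rw [hr1, hq1 (Sum.inl ⟨y, hy'⟩) (Sum.inr c)
        (fun h => hy (congrArg Subtype.val (Sum.inl_injective h)))
        (fun h => by cases h) (fun h => by cases h)]
    rfl
  -- the generic `t` case
  have caseO : ∀ (x y : A) (hxa : x ≠ a) (hya : y ≠ a) (hxa' : x ≠ a') (hya' : y ≠ a')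
      (hxy : x ≠ y),
      r (g (f (ttcl x y hxy, 0), 0)) = q (p (ttcl x y hxy, 0), 0) := by
    intro x y hxa hya hxa' hya' hxy
    rw [hf1 x y hxa hya hxy,
      hg1 (Sum.inl ⟨x, hxa⟩) (Sum.inl ⟨y, hya⟩)
        (fun h => hxa' (congrArg Subtype.val (Sum.inl_injective h)))
        (fun h => hya' (congrArg Subtype.val (Sum.inl_injective h)))
        (fun h => hxy (congrArg Subtype.val (Sum.inl_injective h))),
      hr1, hp1 x y hxa' hya' hxy,
      hq1 (Sum.inl ⟨x, hxa'⟩) (Sum.inl ⟨y, hya'⟩)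
        (fun h => hxa (congrArg Subtype.val (Sum.inl_injective h)))
        (fun h => hya (congrArg Subtype.val (Sum.inl_injective h)))
        (fun h => hxy (congrArg Subtype.val (Sum.inl_injective h)))]
    rfl
  -- key identity 1
  have key1 : ∀ z : DKtTilde A, r (g (f (z, 0), 0)) = q (p (z, 0), 0) := by
    have H : (r.comp (g.comp (lieInlQ _ _))).comp (f.comp (lieInlQ _ _)) =
        (q.comp (lieInlQ _ _)).comp (p.comp (lieInlQ _ _)) := by
      apply dkt_hom_ext
      intro g0
      simp only [LieHom.comp_apply, lieInlQ_apply]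
      cases g0 with
      | t x y hxy =>
        rw [mk_t]
        by_cases hxa : x = a
        · subst x; exact caseA y (Ne.symm hxy) hxy
        · by_cases hya : y = a
          · subst y; rw [ttcl_symm x a hxy]; exact caseA x hxa (Ne.symm hxy)
          · by_cases hxa' : x = a'
            · subst x; exact caseA' y hya (Ne.symm hxy) hxy
            · by_cases hya' : y = a'
              · subst y; rw [ttcl_symm x a' hxy]; exact caseA' x hxa hxa' (Ne.symm hxy)
              · exact caseO x y hxa hya hxa' hya' hxy
      | s x =>
        rw [mk_s]
        by_cases hxa : x = a
        · subst x
          rw [hf6]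
          have gadd : ∀ X Y : DKtTilde ({x : A // x ≠ a} ⊕ B),
              g (X + Y, (0 : DKtTilde C)) = g (X, 0) + g (Y, 0) := fun X Y => by
            rw [← map_add, Prod.mk_add_mk, add_zero]
          rw [gadd, map_add, lieHom_pair_sum_fst g, lieHom_map_sum]
          have hb : ∀ b : B, r (g (scl (Sum.inr b), 0)) =
              (scl (Sum.inr b) :
                DKtTilde ({x : {x : A // x ≠ a'} ⊕ C // x ≠ Sum.inl ⟨a, haa'⟩} ⊕ B)) := by
            intro b
            rw [hg2 (Sum.inr b) (fun h => by cases h), hr2]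
            rfl
          simp only [hb]
          have hps : r (g (pairSum (Sum.inr : B → {x : A // x ≠ a} ⊕ B) Sum.inr_injective, 0)) =
              pairSum (Sum.inr :
                  B → ({x : {x : A // x ≠ a'} ⊕ C // x ≠ Sum.inl ⟨a, haa'⟩} ⊕ B))
                Sum.inr_injective := by
            have h' := map_pairSum (Sum.inr : B → {x : A // x ≠ a} ⊕ B) Sum.inr_injective
              (Sum.inr : B → ({x : {x : A // x ≠ a'} ⊕ C // x ≠ Sum.inl ⟨a, haa'⟩} ⊕ B))
              Sum.inr_injective (r.comp (g.comp (lieInlQ _ _))) ?_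
            · simpa only [LieHom.comp_apply, lieInlQ_apply] using h'
            · intro x y hxy
              simp only [LieHom.comp_apply, lieInlQ_apply]
              rw [hg1 (Sum.inr x) (Sum.inr y) (fun h => by cases h)
                  (fun h => by cases h) (fun h => hxy (Sum.inr_injective h)), hr1]
              rfl
          rw [hps, hp2 a haa', hq6]
        · by_cases hxa' : x = a'
          · subst x
            rw [hf2 a' (Ne.symm haa'), hg6, map_add, lieHom_map_sum]
            simp only [hr2]
            have hpsL : r (pairSum
                (Sum.inr : C →
                  ({x : {x : A // x ≠ a} ⊕ B // x ≠ Sum.inl ⟨a', Ne.symm haa'⟩} ⊕ C))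
                Sum.inr_injective) =
                pairSum (fun c : C =>
                    (Sum.inl ⟨Sum.inr c, fun h => by cases h⟩ :
                      {x : {x : A // x ≠ a'} ⊕ C // x ≠ Sum.inl ⟨a, haa'⟩} ⊕ B))
                  (fun x y h =>
                    Sum.inr_injective (congrArg Subtype.val (Sum.inl_injective h))) := by
              refine map_pairSum _ _ _ _ r ?_
              intro x y hxy
              rw [hr1]
              rfl
            rw [hpsL, hp6]
            have qadd : ∀ X Y : DKtTilde ({x : A // x ≠ a'} ⊕ C),
                q (X + Y, (0 : DKtTilde B)) = q (X, 0) + q (Y, 0) := fun X Y => by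
              rw [← map_add, Prod.mk_add_mk, add_zero]
            rw [qadd, lieHom_pair_sum_fst q]
            have hcq : ∀ c : C, q (scl (Sum.inr c), 0) =
                scl (Sum.inl ⟨Sum.inr c, fun h => by cases h⟩) :=
              fun c => hq2 (Sum.inr c) (fun h => by cases h)
            simp only [hcq]
            have hpsR : q (pairSum (Sum.inr : C → {x : A // x ≠ a'} ⊕ C)
                Sum.inr_injective, 0) =
                pairSum (fun c : C =>
                    (Sum.inl ⟨Sum.inr c, fun h => by cases h⟩ :
                      {x : {x : A // x ≠ a'} ⊕ C // x ≠ Sum.inl ⟨a, haa'⟩} ⊕ B))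
                  (fun x y h =>
                    Sum.inr_injective (congrArg Subtype.val (Sum.inl_injective h))) := by
              have h' := map_pairSum (Sum.inr : C → {x : A // x ≠ a'} ⊕ C) Sum.inr_injective
                (fun c : C =>
                    (Sum.inl ⟨Sum.inr c, fun h => by cases h⟩ :
                      {x : {x : A // x ≠ a'} ⊕ C // x ≠ Sum.inl ⟨a, haa'⟩} ⊕ B))
                (fun x y h =>
                    Sum.inr_injective (congrArg Subtype.val (Sum.inl_injective h)))
                (q.comp (lieInlQ _ _)) ?_
              · simpa only [LieHom.comp_apply, lieInlQ_apply] using h'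
              · intro x y hxy
                simp only [LieHom.comp_apply, lieInlQ_apply]
                rw [hq1 (Sum.inr x) (Sum.inr y) (fun h => by cases h)
                    (fun h => by cases h) (fun h => hxy (Sum.inr_injective h))]
            rw [hpsR]
            rfl
          · rw [hf2 x hxa,
              hg2 (Sum.inl ⟨x, hxa⟩)
                (fun h => hxa' (congrArg Subtype.val (Sum.inl_injective h))), hr2,
              hp2 x hxa',
              hq2 (Sum.inl ⟨x, hxa'⟩)
                (fun h => hxa (congrArg Subtype.val (Sum.inl_injective h)))]
            rfl
    intro z
    simpa only [LieHom.comp_apply, lieInlQ_apply] using LieHom.congr_fun H z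
  -- key identity 2
  have key2 : ∀ v0 : DKtTilde B, r (g (f (0, v0), 0)) = q (0, v0) := by
    have H : (r.comp (g.comp (lieInlQ _ _))).comp (f.comp (lieInrQ _ _)) =
        q.comp (lieInrQ _ _) := by
      apply dkt_hom_ext
      intro g0
      simp only [LieHom.comp_apply, lieInlQ_apply, lieInrQ_apply]
      cases g0 with
      | t x y hxy =>
        rw [mk_t, hf3 x y hxy,
          hg1 (Sum.inr x) (Sum.inr y) (fun h => by cases h)
            (fun h => by cases h) (fun h => hxy (Sum.inr_injective h)),
          hr1, hq3 x y hxy]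
        rfl
      | s x =>
        rw [mk_s, hf4 x, hg2 (Sum.inr x) (fun h => by cases h), hr2, hq4 x]
        rfl
    intro v0
    simpa only [LieHom.comp_apply, lieInlQ_apply, lieInrQ_apply] using LieHom.congr_fun H v0
  -- key identity 3
  have key3 : ∀ w0 : DKtTilde C, r (g (0, w0)) = q (p (0, w0), 0) := by
    have H : r.comp (g.comp (lieInrQ _ _)) =
        (q.comp (lieInlQ _ _)).comp (p.comp (lieInrQ _ _)) := by
      apply dkt_hom_ext
      intro g0
      simp only [LieHom.comp_apply, lieInlQ_apply, lieInrQ_apply]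
      cases g0 with
      | t x y hxy =>
        rw [mk_t, hg3 x y hxy, hr1, hp3 x y hxy,
          hq1 (Sum.inr x) (Sum.inr y) (fun h => by cases h)
            (fun h => by cases h) (fun h => hxy (Sum.inr_injective h))]
        rfl
      | s x =>
        rw [mk_s, hg4 x, hr2, hp4 x, hq2 (Sum.inr x) (fun h => by cases h)]
        rfl
    intro w0
    simpa only [LieHom.comp_apply, lieInlQ_apply, lieInrQ_apply] using LieHom.congr_fun H w0
  -- assembling
  have fsplit : f (u, v) = f (u, 0) + f (0, v) := by
    rw [← map_add, Prod.mk_add_mk, add_zero, zero_add]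
  have gsplit : ∀ X w0, g (X, w0) = g (X, 0) + g (0, w0) := fun X w0 => by
    rw [← map_add, Prod.mk_add_mk, add_zero, zero_add]
  have gadd2 : ∀ X Y, g (X + Y, (0 : DKtTilde C)) = g (X, 0) + g (Y, 0) := fun X Y => by
    rw [← map_add, Prod.mk_add_mk, add_zero]
  have psplit : p (u, w) = p (u, 0) + p (0, w) := by
    rw [← map_add, Prod.mk_add_mk, add_zero, zero_add]
  have qsplit : ∀ X v0, q (X, v0) = q (X, 0) + q (0, v0) := fun X v0 => by
    rw [← map_add, Prod.mk_add_mk, add_zero, zero_add]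
  have qadd2 : ∀ X Y, q (X + Y, (0 : DKtTilde B)) = q (X, 0) + q (Y, 0) := fun X Y => by
    rw [← map_add, Prod.mk_add_mk, add_zero]
  calc r (g (f (u, v), w))
      = r (g (f (u, 0), 0)) + r (g (f (0, v), 0)) + r (g (0, w)) := by
        rw [fsplit, gsplit, gadd2, map_add, map_add]
    _ = q (p (u, 0), 0) + q (0, v) + q (p (0, w), 0) := by
        rw [key1 u, key2 v, key3 w]
    _ = q (p (u, w), v) := by
        rw [qsplit (p (u, w)) v, psplit, qadd2]
        abel
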